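/- arXiv:2109.04384 — 3 statements merged into one kernel-verified Lean document; each statement's English description precedes it below -/
import Mathlib

section
/- For every r⁰ ∈ ℝ³ and every s ∈ ℝ, the rotated point Rot_s(r⁰) belongs both to the closure of the forward reachable set cl C₊(r⁰) and to the closure of the backward reachable set cl C₋(r⁰). -/
open MeasureTheory Set
open NormedSpace

noncomputable section

/-- The state space: Bloch vectors in `ℝ³` with the Euclidean norm. -/
abbrev Pt := EuclideanSpace ℝ (Fin 3)

/-- The drift vector field `f₀`. -/
def f0 (ω γ : ℝ) (r : Pt) : Pt :=
  WithLp.toLp 2 ![-r 1 - (γ / (2 * ω)) * r 0, r 0 - (γ / (2 * ω)) * r 1, (γ / ω) * (1 - r 2)]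

/-- The coherent-control vector field `f₁` (infinitesimal rotation about the `r_x`-axis). -/
def f1 (r : Pt) : Pt := WithLp.toLp 2 ![0, -r 2, r 1]

/-- The incoherent-control vector field `f₂`. -/
def f2 (r : Pt) : Pt := WithLp.toLp 2 ![-r 0 / 2, -r 1 / 2, -r 2]

/-- Velocity of the system with only coherent control `u`. -/
def velC (ω κ γ : ℝ) (u : ℝ → ℝ) (r : ℝ → Pt) (t : ℝ) : Pt :=
  ω • f0 ω γ (r t) + (2 * κ * u t) • f1 (r t)

/-- Forward reachable set `C₊(r⁰)` using only coherent control: endpoints of absolutely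
continuous trajectories, encoded via the integral equation with integrable right-hand side. -/
def reachC (ω κ γ : ℝ) (r0 : Pt) : Set Pt :=
  {r1 | ∃ (T : ℝ) (u : ℝ → ℝ) (r : ℝ → Pt), 0 ≤ T ∧
    IntegrableOn u (Icc 0 T) ∧
    IntervalIntegrable (velC ω κ γ u r) volume 0 T ∧
    (∀ t ∈ Icc 0 T, r t = r0 + ∫ s in (0:ℝ)..t, velC ω κ γ u r s) ∧
    r T = r1}

/-- Backward reachable set `C₋(r¹)` using only coherent control. -/
def reachCneg (ω κ γ : ℝ) (r1 : Pt) : Set Pt := {p | r1 ∈ reachC ω κ γ p}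

/-- Rotation by angle `s` about the `r_x`-axis. -/
def Rot (s : ℝ) (r : Pt) : Pt :=
  WithLp.toLp 2 ![r 0, r 1 * Real.cos s - r 2 * Real.sin s, r 1 * Real.sin s + r 2 * Real.cos s]

instance instNormedAlgebraRatPtCLM : NormedAlgebra ℚ (Pt →L[ℝ] Pt) :=
  NormedAlgebra.restrictScalars ℚ ℝ _

def Amap : Pt →L[ℝ] Pt := LinearMap.toContinuousLinearMap
  { toFun := fun r => (WithLp.toLp 2 ![0, -r 2, r 1] : Pt)
    map_add' := by intro x y; ext i; fin_cases i <;> simp <;> ring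
    map_smul' := by intro c x; ext i; fin_cases i <;> simp <;> ring }

def M0map (ω γ : ℝ) : Pt →L[ℝ] Pt := LinearMap.toContinuousLinearMap
  { toFun := fun r => (WithLp.toLp 2 ![-ω * r 1 - (γ/2) * r 0, ω * r 0 - (γ/2) * r 1, -γ * r 2] : Pt)
    map_add' := by intro x y; ext i; fin_cases i <;> simp <;> ring
    map_smul' := by intro c x; ext i; fin_cases i <;> simp <;> ring }

def bvec (γ : ℝ) : Pt := WithLp.toLp 2 ![0, 0, γ]
def Mv (ω γ v : ℝ) : Pt →L[ℝ] Pt := M0map ω γ + v • Amap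
def pvec (ω γ v : ℝ) : Pt :=
  ((γ/2)^2 + ω^2 + v^2/2)⁻¹ • (WithLp.toLp 2 ![ω * v, -(γ/2) * v, (γ/2)^2 + ω^2] : Pt)

lemma Amap_apply (r : Pt) : Amap r = WithLp.toLp 2 ![0, -r 2, r 1] := rfl
lemma M0map_apply (ω γ : ℝ) (r : Pt) :
    M0map ω γ r = WithLp.toLp 2 ![-ω * r 1 - (γ/2) * r 0, ω * r 0 - (γ/2) * r 1, -γ * r 2] := rfl

lemma den_pos (ω γ v : ℝ) (hω : ω ≠ 0) : 0 < (γ/2)^2 + ω^2 + v^2/2 := by positivity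

lemma Mv_fixed (ω γ v : ℝ) (hω : ω ≠ 0) :
    Mv ω γ v (pvec ω γ v) = -bvec γ := by
  have hd := (den_pos ω γ v hω).ne'
  ext i
  have h1 : Mv ω γ v (pvec ω γ v) i
      = M0map ω γ (pvec ω γ v) i + v * Amap (pvec ω γ v) i := by
    simp [Mv, ContinuousLinearMap.add_apply, ContinuousLinearMap.smul_apply]
  have hp : ∀ j, pvec ω γ v j
      = ((γ/2)^2 + ω^2 + v^2/2)⁻¹ * (WithLp.toLp 2 ![ω * v, -(γ/2) * v, (γ/2)^2 + ω^2] : Pt) j := by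
    intro j; rfl
  fin_cases i <;>
    · rw [h1, M0map_apply, Amap_apply]
      simp only [Matrix.cons_val_zero, Matrix.cons_val_one, Matrix.head_cons,
        Matrix.cons_val_two, Matrix.tail_cons, PiLp.toLp_apply, bvec]
      rw [hp 0, hp 1, hp 2]
      simp only [Matrix.cons_val_zero, Matrix.cons_val_one, Matrix.head_cons,
        Matrix.cons_val_two, Matrix.tail_cons, PiLp.toLp_apply, Fin.reduceFinMk, Matrix.cons_val, PiLp.neg_apply]
      field_simp
      ring

lemma velC_eq (ω κ γ v : ℝ) (hω : ω ≠ 0) (hκ : κ ≠ 0) (r : ℝ → Pt) (t : ℝ) :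
    velC ω κ γ (fun _ => v / (2 * κ)) r t = Mv ω γ v (r t) + bvec γ := by
  ext i
  have h1 : (Mv ω γ v (r t) + bvec γ) i
      = M0map ω γ (r t) i + v * Amap (r t) i + bvec γ i := by
    simp [Mv, ContinuousLinearMap.add_apply, ContinuousLinearMap.smul_apply]
  have h2 : velC ω κ γ (fun _ => v / (2 * κ)) r t i
      = ω * f0 ω γ (r t) i + (2 * κ * (v / (2 * κ))) * f1 (r t) i := by
    simp [velC]
  rw [h1, h2]
  fin_cases i <;>
    · rw [M0map_apply, Amap_apply]
      simp only [f0, f1, bvec, Matrix.cons_val_zero, Matrix.cons_val_one, Matrix.head_cons,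
        Matrix.cons_val_two, Matrix.tail_cons, PiLp.toLp_apply, Fin.reduceFinMk, Matrix.cons_val]
      field_simp
      ring

lemma traj_hasDerivAt (ω γ v : ℝ) (hω : ω ≠ 0) (x : Pt) (t : ℝ) :
    HasDerivAt (fun t => pvec ω γ v + exp (t • Mv ω γ v) (x - pvec ω γ v))
      (Mv ω γ v (pvec ω γ v + exp (t • Mv ω γ v) (x - pvec ω γ v)) + bvec γ) t := by
  have h1 : HasDerivAt (fun t : ℝ => exp (t • Mv ω γ v))
      (Mv ω γ v * exp (t • Mv ω γ v)) t := hasDerivAt_exp_smul_const' (𝕂 := ℝ) (Mv ω γ v) t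
  have h2 := (h1.clm_apply (hasDerivAt_const t (x - pvec ω γ v))).const_add (pvec ω γ v)
  refine h2.congr_deriv ?_
  rw [(Mv ω γ v).map_add, Mv_fixed ω γ v hω]
  simp [ContinuousLinearMap.mul_apply]

lemma traj_continuous (ω γ v : ℝ) (x : Pt) :
    Continuous (fun t : ℝ => pvec ω γ v + exp (t • Mv ω γ v) (x - pvec ω γ v)) := by
  exact continuous_const.add
    (((exp_continuous.comp (continuous_id.smul continuous_const)).clm_apply continuous_const))

lemma mem_reach (ω κ γ : ℝ) (hω : 0 < ω) (hκ : 0 < κ) (v T : ℝ) (hT : 0 ≤ T) (x : Pt) :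
    pvec ω γ v + exp (T • Mv ω γ v) (x - pvec ω γ v) ∈ reachC ω κ γ x := by
  set r : ℝ → Pt := fun t => pvec ω γ v + exp (t • Mv ω γ v) (x - pvec ω γ v) with hr
  have hvel : velC ω κ γ (fun _ => v / (2 * κ)) r = fun t => Mv ω γ v (r t) + bvec γ := by
    funext t; exact velC_eq ω κ γ v hω.ne' hκ.ne' r t
  have hcont : Continuous (velC ω κ γ (fun _ => v / (2 * κ)) r) := by
    rw [hvel]
    exact ((Mv ω γ v).continuous.comp (traj_continuous ω γ v x)).add continuous_const
  have hr0 : r 0 = x := by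
    have hz : (0:ℝ) • Mv ω γ v = 0 := by ext z; simp
    simp only [hr, hz, exp_zero, ContinuousLinearMap.one_apply]
    abel
  refine ⟨T, fun _ => v / (2 * κ), r, hT, ?_, hcont.intervalIntegrable 0 T, ?_, rfl⟩
  · exact integrableOn_const measure_Icc_lt_top.ne
  · intro t ht
    have : ∫ s in (0:ℝ)..t, velC ω κ γ (fun _ => v / (2 * κ)) r s = r t - r 0 := by
      apply intervalIntegral.integral_eq_sub_of_hasDerivAt
      · intro s _
        rw [hvel]
        exact traj_hasDerivAt ω γ v hω.ne' x s
      · exact hcont.intervalIntegrable 0 t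
    rw [this, hr0]; abel

def Emap : Pt →L[ℝ] Pt := LinearMap.toContinuousLinearMap
  { toFun := fun r => (WithLp.toLp 2 ![r 0, 0, 0] : Pt)
    map_add' := by intro x y; ext i; fin_cases i <;> simp
    map_smul' := by intro c x; ext i; fin_cases i <;> simp }

def Pmap : Pt →L[ℝ] Pt := LinearMap.toContinuousLinearMap
  { toFun := fun r => (WithLp.toLp 2 ![0, r 1, r 2] : Pt)
    map_add' := by intro x y; ext i; fin_cases i <;> simp
    map_smul' := by intro c x; ext i; fin_cases i <;> simp }

def Rmat (s : ℝ) : Pt →L[ℝ] Pt := Emap + Real.cos s • Pmap + Real.sin s • Amap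

lemma Rmat_hasDerivAt (s : ℝ) :
    HasDerivAt Rmat (Amap * Rmat s) s := by
  have h1 : HasDerivAt (fun s : ℝ => Emap + Real.cos s • Pmap + Real.sin s • Amap)
      ((-Real.sin s) • Pmap + Real.cos s • Amap) s := by
    have := (((Real.hasDerivAt_cos s).smul_const Pmap).const_add Emap).add
      ((Real.hasDerivAt_sin s).smul_const Amap)
    exact this
  have h2 : Amap * Rmat s = (-Real.sin s) • Pmap + Real.cos s • Amap := by
    ext z i
    have : ∀ w : Pt, Amap w = WithLp.toLp 2 ![0, -w 2, w 1] := fun _ => rfl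
    fin_cases i <;>
      simp [Rmat, ContinuousLinearMap.mul_apply, ContinuousLinearMap.add_apply,
        ContinuousLinearMap.smul_apply, this, Emap, Pmap,
        LinearMap.toContinuousLinearMap] <;> ring
  rw [h2]; exact h1

lemma Rmat_zero : Rmat 0 = 1 := by
  ext z i
  fin_cases i <;>
    simp [Rmat, ContinuousLinearMap.add_apply, ContinuousLinearMap.smul_apply,
      Emap, Pmap, Amap, LinearMap.toContinuousLinearMap, ContinuousLinearMap.one_apply]

lemma exp_smul_Amap (s : ℝ) : exp (s • Amap) = Rmat s := by
  -- F τ := exp (-(τ • Amap)) * Rmat τ is constant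
  set F : ℝ → (Pt →L[ℝ] Pt) := fun τ => exp (τ • -Amap) * Rmat τ with hF
  have hder : ∀ τ, HasDerivAt F 0 τ := by
    intro τ
    have h1 : HasDerivAt (fun τ : ℝ => exp (τ • -Amap)) (-Amap * exp (τ • -Amap)) τ :=
      hasDerivAt_exp_smul_const' (𝕂 := ℝ) (-Amap) τ
    have h2 := h1.mul (Rmat_hasDerivAt τ)
    have hc : Commute (exp (τ • -Amap)) Amap := by
      apply Commute.exp_left
      show _ = _
      ext z
      simp [ContinuousLinearMap.mul_apply, ContinuousLinearMap.smul_apply, _root_.map_smul, map_neg]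
    refine h2.congr_deriv ?_
    have h3 : exp (τ • -Amap) * (Amap * Rmat τ) = Amap * exp (τ • -Amap) * Rmat τ := by
      rw [← mul_assoc, hc.eq]
    have h4 : -Amap * exp (τ • -Amap) * Rmat τ = -(Amap * exp (τ • -Amap) * Rmat τ) := by
      ext z
      simp [ContinuousLinearMap.mul_apply, ContinuousLinearMap.neg_apply]
    rw [h3, h4, neg_add_cancel]
  have hconst : F s = F 0 := by
    have hdiff : Differentiable ℝ F := fun τ => (hder τ).differentiableAt
    have hderiv : ∀ τ, deriv F τ = 0 := fun τ => (hder τ).deriv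
    exact is_const_of_deriv_eq_zero hdiff hderiv s 0
  have hF0 : F 0 = 1 := by
    have hz : (0:ℝ) • -Amap = 0 := by ext z; simp
    rw [hF]; simp only [hz, exp_zero, Rmat_zero, one_mul]
  have hinv : exp (s • Amap) * exp (s • -Amap) = 1 := by
    rw [← exp_add_of_commute]
    · have : s • Amap + s • -Amap = (0:ℝ) • Amap := by ext z; simp
      rw [this]
      have hz : (0:ℝ) • Amap = 0 := by ext z; simp
      rw [hz, exp_zero]
    · show _ = _
      ext z
      simp [ContinuousLinearMap.mul_apply, ContinuousLinearMap.smul_apply, _root_.map_smul, map_neg,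
        smul_smul, mul_comm, mul_assoc]
  calc exp (s • Amap) = exp (s • Amap) * F s := by rw [hconst, hF0, mul_one]
    _ = (exp (s • Amap) * exp (s • -Amap)) * Rmat s := by rw [hF, mul_assoc]
    _ = Rmat s := by rw [hinv, one_mul]

lemma Rmat_apply (s : ℝ) (r : Pt) : Rmat s r = Rot s r := by
  ext i
  fin_cases i <;>
    · simp [Rmat, Rot, ContinuousLinearMap.add_apply, ContinuousLinearMap.smul_apply,
        Emap, Pmap, Amap, LinearMap.toContinuousLinearMap]
      try ring

set_option maxHeartbeats 1000000 in
/-- Every rotation of `r⁰` about the `r_x`-axis is both asymptotically forward reachable and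
asymptotically backward reachable from `r⁰`. -/
theorem rot_mem_closure_reach (ω κ γ : ℝ) (hω : 0 < ω) (hκ : 0 < κ) (hγ : 0 ≤ γ)
    (r0 : Pt) (s : ℝ) :
    Rot s r0 ∈ closure (reachC ω κ γ r0) ∧ Rot s r0 ∈ closure (reachCneg ω κ γ r0) := by
  rcases eq_or_ne s 0 with hs | hs
  · subst hs
    have hR : Rot 0 r0 = r0 := by
      ext i; fin_cases i <;> simp [Rot]
    have hmem : r0 ∈ reachC ω κ γ r0 := by
      have h := mem_reach ω κ γ hω hκ 0 0 le_rfl r0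
      have hz : (0:ℝ) • Mv ω γ 0 = 0 := by ext z; simp
      rw [hz, exp_zero, ContinuousLinearMap.one_apply] at h
      have : pvec ω γ 0 + (r0 - pvec ω γ 0) = r0 := by abel
      rwa [this] at h
    rw [hR]
    exact ⟨subset_closure hmem, subset_closure hmem⟩
  · set C := (γ/2)^2 + ω^2 with hC
    have hCpos : 0 < C := by positivity
    set w1 : Pt := WithLp.toLp 2 ![ω*s, -(γ/2)*s, 0] with hw1
    set w2 : Pt := (WithLp.toLp 2 ![0, 0, C] : Pt) with hw2
    set q : ℝ → Pt := fun τ => (C*τ^2 + s^2/2)⁻¹ • (τ • w1 + τ^2 • w2) with hq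
    have hden : ∀ τ : ℝ, C*τ^2 + s^2/2 ≠ 0 := by
      intro τ
      have : 0 < C*τ^2 + s^2/2 := by positivity
      exact this.ne'
    set Ψ : ℝ → Pt := fun τ => q τ + exp (τ • M0map ω γ + s • Amap) (r0 - q τ) with hΨ
    -- pvec rewrite
    have hpq : ∀ τ : ℝ, τ ≠ 0 → pvec ω γ (s/τ) = q τ := by
      intro τ hτ
      ext i
      have hp : ∀ j, pvec ω γ (s/τ) j
          = ((γ/2)^2 + ω^2 + (s/τ)^2/2)⁻¹ * (WithLp.toLp 2 ![ω * (s/τ), -(γ/2) * (s/τ), (γ/2)^2 + ω^2] : Pt) j :=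
        fun j => rfl
      have hqj : ∀ j, q τ j = (C*τ^2 + s^2/2)⁻¹ * (τ * w1 j + τ^2 * w2 j) := fun j => rfl
      have hd1 : ((γ/2)^2 + ω^2 + (s/τ)^2/2) ≠ 0 := (den_pos ω γ (s/τ) hω.ne').ne'
      rw [hp i, hqj i]
      fin_cases i <;>
        · simp only [hw1, hw2, Matrix.cons_val_zero, Matrix.cons_val_one, Matrix.head_cons,
            Matrix.cons_val_two, Matrix.tail_cons, PiLp.toLp_apply, Fin.reduceFinMk, Matrix.cons_val, hC]
          rw [div_pow]
          field_simp
          ring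
    -- exponent rewrite
    have hexp : ∀ τ : ℝ, τ ≠ 0 → τ • Mv ω γ (s/τ) = τ • M0map ω γ + s • Amap := by
      intro τ hτ
      refine ContinuousLinearMap.ext fun z => PiLp.ext fun i => ?_
      have h1 : (τ • Mv ω γ (s/τ)) z i = τ * (M0map ω γ z i + (s/τ) * Amap z i) := by
        simp [Mv, ContinuousLinearMap.add_apply, ContinuousLinearMap.smul_apply]
        ring
      have h2 : (τ • M0map ω γ + s • Amap) z i = τ * M0map ω γ z i + s * Amap z i := by
        simp [ContinuousLinearMap.add_apply, ContinuousLinearMap.smul_apply]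
      rw [h1, h2]
      field_simp
    have hq0 : q 0 = 0 := by
      ext i
      have : q 0 i = (C*0^2 + s^2/2)⁻¹ * (0 * w1 i + 0^2 * w2 i) := rfl
      rw [this]
      simp
    have hqc : Continuous q := by
      refine Continuous.smul (f := fun τ : ℝ => (C*τ^2 + s^2/2)⁻¹) (g := fun τ : ℝ => τ • w1 + τ^2 • w2) ?_ ?_
      · exact ((continuous_const.mul (continuous_pow 2)).add continuous_const).inv₀ hden
      · exact (continuous_id.smul continuous_const).add ((continuous_pow 2).smul continuous_const)
    have hexpc : Continuous fun τ : ℝ => exp (τ • M0map ω γ + s • Amap) :=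
      exp_continuous.comp ((continuous_id.smul continuous_const).add continuous_const)
    have hΨc : Continuous Ψ := hqc.add (hexpc.clm_apply (continuous_const.sub hqc))
    have hΨ0 : Ψ 0 = Rot s r0 := by
      have hz : (0:ℝ) • M0map ω γ = 0 := by ext z; simp
      rw [hΨ]
      simp only [hq0, hz, zero_add, sub_zero]
      rw [exp_smul_Amap, Rmat_apply]
      try abel
    have htend : Filter.Tendsto Ψ (nhds 0) (nhds (Rot s r0)) := by
      rw [← hΨ0]; exact hΨc.continuousAt.tendsto
    constructor
    · apply mem_closure_of_tendsto (b := nhdsWithin 0 (Ioi 0)) (htend.mono_left nhdsWithin_le_nhds)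
      filter_upwards [self_mem_nhdsWithin] with T hT
      have hT0 : (0:ℝ) < T := mem_Ioi.mp hT
      have hrw : Ψ T = pvec ω γ (s/T) + exp (T • Mv ω γ (s/T)) (r0 - pvec ω γ (s/T)) := by
        rw [hΨ]
        simp only [hpq T hT0.ne', hexp T hT0.ne']
      rw [hrw]
      exact mem_reach ω κ γ hω hκ _ T hT0.le r0
    · have hneg : Filter.Tendsto (fun T : ℝ => -T) (nhdsWithin 0 (Ioi 0)) (nhds 0) := by
        have := (continuous_neg.tendsto (0:ℝ)).mono_left (nhdsWithin_le_nhds (s := Ioi 0))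
        simpa using this
      apply mem_closure_of_tendsto (b := nhdsWithin 0 (Ioi 0)) (htend.comp hneg)
      filter_upwards [self_mem_nhdsWithin] with T hT
      have hT0 : (0:ℝ) < T := mem_Ioi.mp hT
      have hTne : (-T : ℝ) ≠ 0 := by simpa using hT0.ne'
      set v := s / (-T) with hv
      have hstart : Ψ (-T) = pvec ω γ v + exp ((-T) • Mv ω γ v) (r0 - pvec ω γ v) := by
        rw [hΨ]
        simp only [← hpq (-T) hTne, ← hexp (-T) hTne, hv]
      -- commutation and cancellation
      have hcomm : Commute (T • Mv ω γ v) ((-T) • Mv ω γ v) := by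
        show _ = _
        ext z
        simp [ContinuousLinearMap.mul_apply, ContinuousLinearMap.smul_apply, _root_.map_smul,
          smul_smul, mul_comm]
      have hsum : T • Mv ω γ v + (-T) • Mv ω γ v = 0 := by
        ext z
        simp [ContinuousLinearMap.add_apply, ContinuousLinearMap.smul_apply, ← add_smul]
      have hcancel : exp (T • Mv ω γ v) * exp ((-T) • Mv ω γ v) = 1 := by
        rw [← exp_add_of_commute hcomm, hsum, exp_zero]
      have hmem := mem_reach ω κ γ hω hκ v T hT0.le (Ψ (-T))
      have hr0 : pvec ω γ v + exp (T • Mv ω γ v) (Ψ (-T) - pvec ω γ v) = r0 := by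
        rw [hstart]
        have h5 : pvec ω γ v + exp ((-T) • Mv ω γ v) (r0 - pvec ω γ v) - pvec ω γ v
            = exp ((-T) • Mv ω γ v) (r0 - pvec ω γ v) := by abel
        rw [h5, ← ContinuousLinearMap.mul_apply, hcancel, ContinuousLinearMap.one_apply]
        abel
      rw [hr0] at hmem
      exact hmem
end
end

section
/- The control system has full rank everywhere: if γ > 0, then for every r ∈ ℝ³ the linear span of the vectors f₀(r), f₁(r), f₃(r), f₄(r), f₅(r), f₆(r), f₇(r) is all of ℝ³. -/
open MeasureTheory Set

noncomputable section

/-- Lie bracket of vector fields on `ℝ³`: `[f,g](r) = Df(r)·g(r) − Dg(r)·f(r)`. -/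
def lieB (f g : Pt → Pt) (r : Pt) : Pt := fderiv ℝ f r (g r) - fderiv ℝ g r (f r)

/-! ### Auxiliary machinery: affine vector fields and their brackets -/

/-- The identification of `EuclideanSpace ℝ (Fin 3)` with `Fin 3 → ℝ`. -/
def toPt : (Fin 3 → ℝ) ≃L[ℝ] Pt := (EuclideanSpace.equiv (Fin 3) ℝ).symm

/-- The continuous linear map on `Pt` induced by a matrix. -/
def affL (A : Matrix (Fin 3) (Fin 3) ℝ) : Pt →L[ℝ] Pt :=
  (toPt.toContinuousLinearMap).comp
    ((A.mulVecLin.toContinuousLinearMap).comp toPt.symm.toContinuousLinearMap)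

/-- An affine vector field `r ↦ A r + c` on `Pt`. -/
def aff (A : Matrix (Fin 3) (Fin 3) ℝ) (c : Fin 3 → ℝ) (r : Pt) : Pt :=
  affL A r + toPt c

lemma aff_apply (A : Matrix (Fin 3) (Fin 3) ℝ) (c : Fin 3 → ℝ) (r : Pt) (i : Fin 3) :
    aff A c r i = A.mulVec (fun j => r j) i + c i := rfl

lemma hasFDerivAt_aff (A : Matrix (Fin 3) (Fin 3) ℝ) (c : Fin 3 → ℝ) (r : Pt) :
    HasFDerivAt (aff A c) (affL A) r := (affL A).hasFDerivAt.add_const (toPt c)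

lemma lieB_aff (A B : Matrix (Fin 3) (Fin 3) ℝ) (a b : Fin 3 → ℝ) :
    lieB (aff A a) (aff B b) = aff (A * B - B * A) (A.mulVec b - B.mulVec a) := by
  funext r
  unfold lieB
  rw [(hasFDerivAt_aff A a r).fderiv, (hasFDerivAt_aff B b r).fderiv]
  show affL A (aff B b r) - affL B (aff A a r) = _
  simp only [aff, affL, ContinuousLinearMap.comp_apply, ContinuousLinearEquiv.coe_coe,
    LinearMap.coe_toContinuousLinearMap', Matrix.mulVecLin_apply]
  rw [← toPt.map_sub, ← toPt.map_add]
  simp only [map_add, toPt.symm_apply_apply]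
  simp [Matrix.mulVec_add, Matrix.mulVec_mulVec, Matrix.sub_mulVec, Matrix.add_mulVec]
  abel

/-! ### The matrices of the fields and their brackets -/

def A0 (k : ℝ) : Matrix (Fin 3) (Fin 3) ℝ := ![![-k,-1,0],![1,-k,0],![0,0,-2*k]]
def c0 (k : ℝ) : Fin 3 → ℝ := ![0,0,2*k]
def A1 : Matrix (Fin 3) (Fin 3) ℝ := ![![0,0,0],![0,0,-1],![0,1,0]]
def A3 (k : ℝ) : Matrix (Fin 3) (Fin 3) ℝ := ![![0,0,1],![0,0,-k],![-1,-k,0]]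
def c3 (k : ℝ) : Fin 3 → ℝ := ![0,2*k,0]
def A4 (k : ℝ) : Matrix (Fin 3) (Fin 3) ℝ := ![![0,0,2*k],![0,0,1-k^2],![2*k,k^2-1,0]]
def c4 (k : ℝ) : Fin 3 → ℝ := ![-4*k,0,0]
def A5 (k : ℝ) : Matrix (Fin 3) (Fin 3) ℝ := ![![0,-1,0],![1,2*k,0],![0,0,-2*k]]
def c5 (k : ℝ) : Fin 3 → ℝ := ![0,0,2*k]
def A6 (k : ℝ) : Matrix (Fin 3) (Fin 3) ℝ := ![![0,0,-1],![0,0,4*k],![1,4*k,0]]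
def c6 (k : ℝ) : Fin 3 → ℝ := ![0,-2*k,0]
def A7 (k : ℝ) : Matrix (Fin 3) (Fin 3) ℝ := ![![0,-1,0],![1,8*k,0],![0,0,-8*k]]
def c7 (k : ℝ) : Fin 3 → ℝ := ![0,0,2*k]
def B1 (k : ℝ) : Matrix (Fin 3) (Fin 3) ℝ := ![![0,0,-1],![0,0,k],![1,k,0]]
def d1 (k : ℝ) : Fin 3 → ℝ := ![0,-2*k,0]
def B2 (k : ℝ) : Matrix (Fin 3) (Fin 3) ℝ := ![![0,1,0],![-1,-2*k,0],![0,0,2*k]]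
def d2 (k : ℝ) : Fin 3 → ℝ := ![0,0,-2*k]
def B3 (k : ℝ) : Matrix (Fin 3) (Fin 3) ℝ := ![![0,0,1],![0,0,-4*k],![-1,-4*k,0]]
def d3 (k : ℝ) : Fin 3 → ℝ := ![0,2*k,0]

lemma f0_eq (ω γ : ℝ) (hω : ω ≠ 0) : f0 ω γ = aff (A0 (γ/(2*ω))) (c0 (γ/(2*ω))) := by
  funext r; ext i
  rw [aff_apply]
  fin_cases i <;>
    simp [f0, A0, c0, Matrix.mulVec, dotProduct, Fin.sum_univ_three] <;>
    field_simp <;> ring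

lemma f1_eq : f1 = aff A1 0 := by
  funext r; ext i
  rw [aff_apply]
  fin_cases i <;>
    simp [f1, A1, Matrix.mulVec, dotProduct, Fin.sum_univ_three]

lemma matrix_ext3 {A B : Matrix (Fin 3) (Fin 3) ℝ}
    (h : ∀ i j, A i j = B i j) : A = B := by
  ext i j; exact h i j

/-- Helper: rewriting a bracket of two affine fields as an explicit affine field. -/
lemma aff_congr {A B : Matrix (Fin 3) (Fin 3) ℝ} {a b : Fin 3 → ℝ}
    (hM : A = B) (hc : a = b) : aff A a = aff B b := by rw [hM, hc]

lemma bracket01 (k : ℝ) : lieB (aff (A0 k) (c0 k)) (aff A1 0) = aff (A3 k) (c3 k) := by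
  rw [lieB_aff]
  refine aff_congr ?_ ?_
  · apply matrix_ext3; intro i j
    fin_cases i <;> fin_cases j <;>
      simp only [Matrix.sub_apply, Matrix.mul_apply, Fin.sum_univ_three] <;>
      simp [A0, A1, A3, Matrix.mul_apply, Fin.sum_univ_three] <;> ring
  · funext i
    fin_cases i <;>
      simp [A0, A1, c0, c3, Matrix.mulVec, dotProduct, Fin.sum_univ_three]

lemma bracket03 (k : ℝ) : lieB (aff (A0 k) (c0 k)) (aff (A3 k) (c3 k)) = aff (A4 k) (c4 k) := by
  rw [lieB_aff]
  refine aff_congr ?_ ?_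
  · apply matrix_ext3; intro i j
    fin_cases i <;> fin_cases j <;>
      simp only [Matrix.sub_apply, Matrix.mul_apply, Fin.sum_univ_three] <;>
      simp [A0, A3, A4, Matrix.mul_apply, Fin.sum_univ_three] <;> ring
  · funext i
    fin_cases i <;>
      simp [A0, A3, c0, c3, c4, Matrix.mulVec, dotProduct, Fin.sum_univ_three] <;> ring

lemma bracket13 (k : ℝ) : lieB (aff A1 0) (aff (A3 k) (c3 k)) = aff (A5 k) (c5 k) := by
  rw [lieB_aff]
  refine aff_congr ?_ ?_
  · apply matrix_ext3; intro i j
    fin_cases i <;> fin_cases j <;>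
      simp only [Matrix.sub_apply, Matrix.mul_apply, Fin.sum_univ_three] <;>
      simp [A1, A3, A5, Matrix.mul_apply, Fin.sum_univ_three] <;> ring
  · funext i
    fin_cases i <;>
      simp [A1, A3, c3, c5, Matrix.mulVec, dotProduct, Fin.sum_univ_three]

lemma bracket15 (k : ℝ) : lieB (aff A1 0) (aff (A5 k) (c5 k)) = aff (A6 k) (c6 k) := by
  rw [lieB_aff]
  refine aff_congr ?_ ?_
  · apply matrix_ext3; intro i j
    fin_cases i <;> fin_cases j <;>
      simp only [Matrix.sub_apply, Matrix.mul_apply, Fin.sum_univ_three] <;>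
      simp [A1, A5, A6, Matrix.mul_apply, Fin.sum_univ_three] <;> ring
  · funext i
    fin_cases i <;>
      simp [A1, A5, c5, c6, Matrix.mulVec, dotProduct, Fin.sum_univ_three]

lemma bracket10 (k : ℝ) : lieB (aff A1 0) (aff (A0 k) (c0 k)) = aff (B1 k) (d1 k) := by
  rw [lieB_aff]
  refine aff_congr ?_ ?_
  · apply matrix_ext3; intro i j
    fin_cases i <;> fin_cases j <;>
      simp only [Matrix.sub_apply, Matrix.mul_apply, Fin.sum_univ_three] <;>
      simp [A1, A0, B1, Matrix.mul_apply, Fin.sum_univ_three] <;> ring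
  · funext i
    fin_cases i <;>
      simp [A1, A0, c0, d1, Matrix.mulVec, dotProduct, Fin.sum_univ_three]

lemma bracket1g1 (k : ℝ) : lieB (aff A1 0) (aff (B1 k) (d1 k)) = aff (B2 k) (d2 k) := by
  rw [lieB_aff]
  refine aff_congr ?_ ?_
  · apply matrix_ext3; intro i j
    fin_cases i <;> fin_cases j <;>
      simp only [Matrix.sub_apply, Matrix.mul_apply, Fin.sum_univ_three] <;>
      simp [A1, B1, B2, Matrix.mul_apply, Fin.sum_univ_three] <;> ring
  · funext i
    fin_cases i <;>
      simp [A1, B1, d1, d2, Matrix.mulVec, dotProduct, Fin.sum_univ_three]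

lemma bracket1g2 (k : ℝ) : lieB (aff A1 0) (aff (B2 k) (d2 k)) = aff (B3 k) (d3 k) := by
  rw [lieB_aff]
  refine aff_congr ?_ ?_
  · apply matrix_ext3; intro i j
    fin_cases i <;> fin_cases j <;>
      simp only [Matrix.sub_apply, Matrix.mul_apply, Fin.sum_univ_three] <;>
      simp [A1, B2, B3, Matrix.mul_apply, Fin.sum_univ_three] <;> ring
  · funext i
    fin_cases i <;>
      simp [A1, B2, d2, d3, Matrix.mulVec, dotProduct, Fin.sum_univ_three]

lemma bracket1g3 (k : ℝ) : lieB (aff A1 0) (aff (B3 k) (d3 k)) = aff (A7 k) (c7 k) := by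
  rw [lieB_aff]
  refine aff_congr ?_ ?_
  · apply matrix_ext3; intro i j
    fin_cases i <;> fin_cases j <;>
      simp only [Matrix.sub_apply, Matrix.mul_apply, Fin.sum_univ_three] <;>
      simp [A1, B3, A7, Matrix.mul_apply, Fin.sum_univ_three] <;> ring
  · funext i
    fin_cases i <;>
      simp [A1, B3, d3, c7, Matrix.mulVec, dotProduct, Fin.sum_univ_three]

set_option maxHeartbeats 1000000 in
lemma span_top (k : ℝ) (hkpos : 0 < k) (r : Pt) :
    Submodule.span ℝ ({aff (A0 k) (c0 k) r, aff A1 0 r, aff (A3 k) (c3 k) r,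
      aff (A4 k) (c4 k) r, aff (A5 k) (c5 k) r, aff (A6 k) (c6 k) r,
      aff (A7 k) (c7 k) r} : Set Pt) = ⊤ := by
  set S : Set Pt := {aff (A0 k) (c0 k) r, aff A1 0 r, aff (A3 k) (c3 k) r,
    aff (A4 k) (c4 k) r, aff (A5 k) (c5 k) r, aff (A6 k) (c6 k) r, aff (A7 k) (c7 k) r}
    with hS
  set N := Submodule.span ℝ S with hN
  have hv1 : aff A1 0 r ∈ N := Submodule.subset_span (by simp [hS])
  have hv3 : aff (A3 k) (c3 k) r ∈ N := Submodule.subset_span (by simp [hS])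
  have hv4 : aff (A4 k) (c4 k) r ∈ N := Submodule.subset_span (by simp [hS])
  have hv5 : aff (A5 k) (c5 k) r ∈ N := Submodule.subset_span (by simp [hS])
  have hv6 : aff (A6 k) (c6 k) r ∈ N := Submodule.subset_span (by simp [hS])
  have hv7 : aff (A7 k) (c7 k) r ∈ N := Submodule.subset_span (by simp [hS])
  have hkne : k ≠ 0 := ne_of_gt hkpos
  have e2mem : EuclideanSpace.single (1 : Fin 3) (1:ℝ) ∈ N := by
    by_cases h' : r 1 = 0 ∧ r 2 = 0
    · have hQ : 4*k^2 + (r 0)^2 ≠ 0 := by positivity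
      have hcomb : EuclideanSpace.single (1 : Fin 3) (1:ℝ) =
          (2*k/(4*k^2 + (r 0)^2)) • aff (A3 k) (c3 k) r
          + ((r 0)/(4*k^2 + (r 0)^2)) • aff (A5 k) (c5 k) r := by
        ext i
        fin_cases i <;>
          simp only [PiLp.add_apply, PiLp.smul_apply, aff_apply] <;>
          simp [aff_apply, A3, c3, A5, c5, Matrix.mulVec, dotProduct,
            Fin.sum_univ_three, PiLp.add_apply, PiLp.smul_apply,
            EuclideanSpace.single_apply, h'.1, h'.2] <;>
          field_simp <;> ring
      rw [hcomb]
      exact N.add_mem (N.smul_mem _ hv3) (N.smul_mem _ hv5)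
    · have hQ : (r 1)^2 + (r 2)^2 ≠ 0 := by
        rcases not_and_or.mp h' with h | h <;> positivity
      have hcomb : EuclideanSpace.single (1 : Fin 3) (1:ℝ) =
          (-(r 1)/(6*k*((r 1)^2 + (r 2)^2))) • aff (A5 k) (c5 k) r
          + ((r 1)/(6*k*((r 1)^2 + (r 2)^2))) • aff (A7 k) (c7 k) r
          + ((r 2)/(3*k*((r 1)^2 + (r 2)^2))) • aff (A3 k) (c3 k) r
          + ((r 2)/(3*k*((r 1)^2 + (r 2)^2))) • aff (A6 k) (c6 k) r := by
        ext i
        fin_cases i <;>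
          simp only [PiLp.add_apply, PiLp.smul_apply, aff_apply] <;>
          simp [aff_apply, A3, c3, A5, c5, A6, c6, A7, c7, Matrix.mulVec,
            dotProduct, Fin.sum_univ_three, PiLp.add_apply, PiLp.smul_apply,
            EuclideanSpace.single_apply] <;>
          field_simp <;> ring
      rw [hcomb]
      exact N.add_mem (N.add_mem (N.add_mem (N.smul_mem _ hv5) (N.smul_mem _ hv7))
        (N.smul_mem _ hv3)) (N.smul_mem _ hv6)
  have e3mem : EuclideanSpace.single (2 : Fin 3) (1:ℝ) ∈ N := by
    by_cases h' : r 1 = 0 ∧ r 2 = 0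
    · have hQ : 4*k^2 + (r 0)^2 ≠ 0 := by positivity
      have hcomb : EuclideanSpace.single (2 : Fin 3) (1:ℝ) =
          (-(r 0)/(4*k^2 + (r 0)^2)) • aff (A3 k) (c3 k) r
          + (2*k/(4*k^2 + (r 0)^2)) • aff (A5 k) (c5 k) r := by
        ext i
        fin_cases i <;>
          simp only [PiLp.add_apply, PiLp.smul_apply, aff_apply] <;>
          simp [aff_apply, A3, c3, A5, c5, Matrix.mulVec, dotProduct,
            Fin.sum_univ_three, PiLp.add_apply, PiLp.smul_apply,
            EuclideanSpace.single_apply, h'.1, h'.2] <;>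
          field_simp <;> ring
      rw [hcomb]
      exact N.add_mem (N.smul_mem _ hv3) (N.smul_mem _ hv5)
    · have hQ : (r 1)^2 + (r 2)^2 ≠ 0 := by
        rcases not_and_or.mp h' with h | h <;> positivity
      have hcomb : EuclideanSpace.single (2 : Fin 3) (1:ℝ) =
          ((r 2)/(6*k*((r 1)^2 + (r 2)^2))) • aff (A5 k) (c5 k) r
          + (-(r 2)/(6*k*((r 1)^2 + (r 2)^2))) • aff (A7 k) (c7 k) r
          + ((r 1)/(3*k*((r 1)^2 + (r 2)^2))) • aff (A3 k) (c3 k) r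
          + ((r 1)/(3*k*((r 1)^2 + (r 2)^2))) • aff (A6 k) (c6 k) r := by
        ext i
        fin_cases i <;>
          simp only [PiLp.add_apply, PiLp.smul_apply, aff_apply] <;>
          simp [aff_apply, A3, c3, A5, c5, A6, c6, A7, c7, Matrix.mulVec,
            dotProduct, Fin.sum_univ_three, PiLp.add_apply, PiLp.smul_apply,
            EuclideanSpace.single_apply] <;>
          field_simp <;> ring
      rw [hcomb]
      exact N.add_mem (N.add_mem (N.add_mem (N.smul_mem _ hv5) (N.smul_mem _ hv7))
        (N.smul_mem _ hv3)) (N.smul_mem _ hv6)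
  have e1mem : EuclideanSpace.single (0 : Fin 3) (1:ℝ) ∈ N := by
    by_cases hz : r 2 ≠ 0
    · have hcomb : EuclideanSpace.single (0 : Fin 3) (1:ℝ) =
          (1/(r 2)) • aff (A3 k) (c3 k) r
          + (-(2*k - k*(r 2))/(r 2)) • EuclideanSpace.single (1 : Fin 3) (1:ℝ)
          + ((r 0 + k*(r 1))/(r 2)) • EuclideanSpace.single (2 : Fin 3) (1:ℝ) := by
        ext i
        fin_cases i <;>
          simp only [PiLp.add_apply, PiLp.smul_apply, aff_apply] <;>
          simp [aff_apply, A3, c3, Matrix.mulVec, dotProduct,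
            Fin.sum_univ_three, PiLp.add_apply, PiLp.smul_apply,
            EuclideanSpace.single_apply] <;>
          field_simp <;> ring
      rw [hcomb]
      exact N.add_mem (N.add_mem (N.smul_mem _ hv3) (N.smul_mem _ e2mem))
        (N.smul_mem _ e3mem)
    · by_cases hy : r 1 ≠ 0
      · have hcomb : EuclideanSpace.single (0 : Fin 3) (1:ℝ) =
            (-1/(r 1)) • aff (A5 k) (c5 k) r
            + ((r 0 + 2*k*(r 1))/(r 1)) • EuclideanSpace.single (1 : Fin 3) (1:ℝ)
            + ((2*k - 2*k*(r 2))/(r 1)) • EuclideanSpace.single (2 : Fin 3) (1:ℝ) := by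
          ext i
          fin_cases i <;>
            simp only [PiLp.add_apply, PiLp.smul_apply, aff_apply] <;>
            simp [aff_apply, A5, c5, Matrix.mulVec, dotProduct,
              Fin.sum_univ_three, PiLp.add_apply, PiLp.smul_apply,
              EuclideanSpace.single_apply] <;>
            field_simp <;> ring
        rw [hcomb]
        exact N.add_mem (N.add_mem (N.smul_mem _ hv5) (N.smul_mem _ e2mem))
          (N.smul_mem _ e3mem)
      · push_neg at hz hy
        have hcomb : EuclideanSpace.single (0 : Fin 3) (1:ℝ) =
            (-1/(4*k)) • aff (A4 k) (c4 k) r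
            + ((r 0)/2) • EuclideanSpace.single (2 : Fin 3) (1:ℝ) := by
          ext i
          fin_cases i <;>
            simp only [PiLp.add_apply, PiLp.smul_apply, aff_apply] <;>
            simp [aff_apply, A4, c4, Matrix.mulVec, dotProduct,
              Fin.sum_univ_three, PiLp.add_apply, PiLp.smul_apply,
              EuclideanSpace.single_apply, hz, hy] <;>
            field_simp <;> ring
        rw [hcomb]
        exact N.add_mem (N.smul_mem _ hv4) (N.smul_mem _ e3mem)
  rw [eq_top_iff]
  rintro w -
  have hw : w = w 0 • EuclideanSpace.single (0:Fin 3) (1:ℝ)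
      + w 1 • EuclideanSpace.single (1:Fin 3) (1:ℝ)
      + w 2 • EuclideanSpace.single (2:Fin 3) (1:ℝ) := by
    ext i
    fin_cases i <;>
      simp [PiLp.add_apply, PiLp.smul_apply, EuclideanSpace.single_apply]
  rw [hw]
  exact N.add_mem (N.add_mem (N.smul_mem _ e1mem) (N.smul_mem _ e2mem)) (N.smul_mem _ e3mem)


/-- The control system has full rank everywhere: the iterated Lie brackets
`f₀, f₁, f₃ = [f₀,f₁], f₄ = [f₀,f₃], f₅ = [f₁,f₃], f₆ = [f₁,f₅], f₇ = (ad f₁)⁴ f₀`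
span all of `ℝ³` at every point. -/
theorem full_rank (ω γ : ℝ) (hω : 0 < ω) (hγ : 0 < γ) (r : Pt) :
    Submodule.span ℝ
      ({f0 ω γ r, f1 r,
        lieB (f0 ω γ) f1 r,
        lieB (f0 ω γ) (lieB (f0 ω γ) f1) r,
        lieB f1 (lieB (f0 ω γ) f1) r,
        lieB f1 (lieB f1 (lieB (f0 ω γ) f1)) r,
        lieB f1 (lieB f1 (lieB f1 (lieB f1 (f0 ω γ)))) r} : Set Pt) = ⊤ := by
  have hkpos : 0 < γ / (2 * ω) := div_pos hγ (by linarith)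
  have h0 : f0 ω γ = aff (A0 (γ/(2*ω))) (c0 (γ/(2*ω))) := f0_eq ω γ (ne_of_gt hω)
  rw [h0, f1_eq, bracket01, bracket03, bracket13, bracket15, bracket10, bracket1g1,
    bracket1g2, bracket1g3]
  exact span_top _ hkpos r

end
end

section
/- The controlled velocity field points inward on the unit sphere: for every r ∈ ℝ³ with |r| = 1, every u ∈ ℝ, and every n ≥ 0, the Euclidean inner product ⟨r, ω f₀(r) + 2κ u f₁(r) + γ n f₂(r)⟩ is nonpositive. -/
open MeasureTheory Set

noncomputable section

open RealInnerProductSpace in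
/-- The controlled velocity field points inward on the unit sphere. -/
theorem velocity_inward_on_sphere (ω κ γ : ℝ) (hω : 0 < ω) (hκ : 0 < κ) (hγ : 0 ≤ γ)
    (r : Pt) (hr : ‖r‖ = 1) (u n : ℝ) (hn : 0 ≤ n) :
    ⟪r, ω • f0 ω γ r + (2 * κ * u) • f1 r + (γ * n) • f2 r⟫ ≤ 0 := by
  have h1 : r 0 ^ 2 + r 1 ^ 2 + r 2 ^ 2 = 1 := by
    have h : ‖r‖ ^ 2 = 1 := by rw [hr]; norm_num
    rw [EuclideanSpace.norm_eq, Real.sq_sqrt (Finset.sum_nonneg fun i _ => sq_nonneg _)] at h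
    simpa [Fin.sum_univ_three, Real.norm_eq_abs, sq_abs] using h
  have key : ⟪r, ω • f0 ω γ r + (2 * κ * u) • f1 r + (γ * n) • f2 r⟫
      = -(γ/2) * (1 - r 2)^2 + γ * n * (-(r 0^2 + r 1^2)/2 - r 2^2) := by
    simp only [PiLp.inner_apply, PiLp.add_apply, PiLp.smul_apply, smul_eq_mul,
      RCLike.inner_apply, starRingEnd_apply, star_trivial, Fin.sum_univ_three,
      f0, f1, f2, Matrix.cons_val_zero, Matrix.cons_val_one, Matrix.head_cons,
      Matrix.cons_val_two, Matrix.tail_cons, PiLp.toLp_apply]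
    field_simp
    linear_combination (-γ) * h1
  rw [key]
  nlinarith [sq_nonneg (1 - r 2), sq_nonneg (r 0), sq_nonneg (r 1), sq_nonneg (r 2),
    mul_nonneg hγ hn]
end
end
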